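/- Let 0 < p ≤ 1 and p < s ≤ ∞. Then BL^{p,s}_{|x|^0}(ℝⁿ) = L^p(ℝⁿ) as sets, with equivalent quasinorms. -/

import Mathlib

open MeasureTheory Metric ENNReal Filter
open scoped ENNReal NNReal
open scoped Topology

noncomputable section

abbrev Rn (n : ℕ) := EuclideanSpace ℝ (Fin n)

/-- A `(p,s,α)`-block: supported in a closed ball `B(x₀,r)` with
`‖a‖_{L^s} ≤ |B|^{-α/(pn)-1/p+1/s}` (with `1/s = 0` when `s = ∞`). -/
def IsBlock (n : ℕ) (p : ℝ) (s : ℝ≥0∞) (α : ℝ) (a : Rn n → ℝ) : Prop :=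
  Measurable a ∧
  ∃ x₀ : Rn n, ∃ r : ℝ, 0 < r ∧ (∀ x, x ∉ closedBall x₀ r → a x = 0) ∧
    eLpNorm a s volume ≤
      ENNReal.ofReal ((volume (closedBall x₀ r)).toReal ^ (-α / (p * n) - 1 / p + s.toReal⁻¹))

lemma tsum_rpow_le {b : ℕ → ℝ≥0∞} {q : ℝ} (hq : 0 < q) (hq1 : q ≤ 1) :
    (∑' k, b k) ^ q ≤ ∑' k, b k ^ q := by
  have hfin : ∀ F : Finset ℕ, (∑ k ∈ F, b k) ^ q ≤ ∑ k ∈ F, b k ^ q := by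
    intro F
    induction F using Finset.induction with
    | empty => simp [ENNReal.zero_rpow_of_pos hq]
    | insert _ _ hx ih =>
        rw [Finset.sum_insert hx, Finset.sum_insert hx]
        exact le_trans (ENNReal.rpow_add_le_add_rpow _ _ hq.le hq1) (by gcongr)
  rw [ENNReal.tsum_eq_iSup_sum]
  have : (⨆ F : Finset ℕ, ∑ k ∈ F, b k) ^ q = ⨆ F : Finset ℕ, (∑ k ∈ F, b k) ^ q := by
    exact (ENNReal.orderIsoRpow q hq).map_iSup _
  rw [this]
  exact iSup_le fun F => (hfin F).trans (ENNReal.sum_le_tsum F)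


variable {n : ℕ} {p : ℝ} {s : ℝ≥0∞}

lemma block_eLpNorm_le_one (hp : 0 < p) (hps : ENNReal.ofReal p < s)
    {a : Rn n → ℝ} (ha : IsBlock n p s 0 a) :
    eLpNorm a (ENNReal.ofReal p) volume ≤ 1 := by
  obtain ⟨hma, x₀, r, hr, hsupp, hbound⟩ := ha
  set B := closedBall x₀ r with hB
  have hBm : MeasurableSet B := measurableSet_closedBall
  have hB0 : volume B ≠ 0 := (measure_closedBall_pos volume x₀ hr).ne'
  have hBt : volume B ≠ ∞ := measure_closedBall_lt_top.ne
  have hind : a = B.indicator a := by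
    funext x
    by_cases hx : x ∈ B
    · simp [Set.indicator_of_mem hx]
    · simp [Set.indicator_of_notMem hx, hsupp x hx]
  have h1 : eLpNorm a (ENNReal.ofReal p) volume
      = eLpNorm a (ENNReal.ofReal p) (volume.restrict B) := by
    conv_lhs => rw [hind]
    exact eLpNorm_indicator_eq_eLpNorm_restrict hBm
  have h2 : eLpNorm a (ENNReal.ofReal p) (volume.restrict B)
      ≤ eLpNorm a s (volume.restrict B)
        * (volume.restrict B) Set.univ ^ (1 / (ENNReal.ofReal p).toReal - 1 / s.toReal) :=
    eLpNorm_le_eLpNorm_mul_rpow_measure_univ hps.le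
      (hma.aestronglyMeasurable)
  have h3 : eLpNorm a s (volume.restrict B) ≤ eLpNorm a s volume :=
    eLpNorm_mono_measure a Measure.restrict_le_self
  have htR : (volume.restrict B) Set.univ = volume B := by
    simp [Measure.restrict_apply_univ]
  have hofp : (ENNReal.ofReal p).toReal = p := ENNReal.toReal_ofReal hp.le
  have hBtoReal : 0 < (volume B).toReal := ENNReal.toReal_pos hB0 hBt
  have hconv : ENNReal.ofReal ((volume B).toReal ^ (-0 / (p * n) - 1 / p + s.toReal⁻¹))
      = volume B ^ (-0 / (p * n) - 1 / p + s.toReal⁻¹) := by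
    rw [← ENNReal.ofReal_rpow_of_pos hBtoReal, ENNReal.ofReal_toReal hBt]
  calc eLpNorm a (ENNReal.ofReal p) volume
      ≤ eLpNorm a s volume * volume B ^ (1 / p - 1 / s.toReal) := by
        rw [h1]
        refine h2.trans ?_
        rw [htR, hofp]
        gcongr
    _ ≤ volume B ^ (-0 / (p * n) - 1 / p + s.toReal⁻¹) * volume B ^ (1 / p - 1 / s.toReal) := by
        gcongr
        rw [← hconv]
        exact hbound
    _ = 1 := by
        rw [← ENNReal.rpow_add _ _ hB0 hBt]
        norm_num


/-- A decomposition `f = Σ l k • a k` (a.e. convergence) into `(p,s,α)`-blocks with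
`Σ |l k| ^ min p 1 < ∞`. -/
def IsBLDecomp (n : ℕ) (p : ℝ) (s : ℝ≥0∞) (α : ℝ)
    (f : Rn n → ℝ) (l : ℕ → ℝ) (a : ℕ → Rn n → ℝ) : Prop :=
  (∀ k, IsBlock n p s α (a k)) ∧ Summable (fun k => |l k| ^ min p 1) ∧
  (∀ᵐ x : Rn n ∂volume, HasSum (fun k => l k * a k x) (f x))

lemma decomp_bound (hp : 0 < p) (hp1 : p ≤ 1) (hps : ENNReal.ofReal p < s)
    {f : Rn n → ℝ} {l : ℕ → ℝ} {a : ℕ → Rn n → ℝ} (hd : IsBLDecomp n p s 0 f l a) :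
    eLpNorm f (ENNReal.ofReal p) volume ≤ ENNReal.ofReal ((∑' k, |l k| ^ p) ^ (1 / p)) := by
  obtain ⟨hblocks, hsum, hae⟩ := hd
  have hmin : min p 1 = p := min_eq_left hp1
  rw [hmin] at hsum
  have hp'0 : ENNReal.ofReal p ≠ 0 := by simp [ENNReal.ofReal_eq_zero, not_le, hp]
  have hp'T : ENNReal.ofReal p ≠ ∞ := ENNReal.ofReal_ne_top
  have hofp : (ENNReal.ofReal p).toReal = p := ENNReal.toReal_ofReal hp.le
  have hmeas : ∀ k, Measurable fun x => ENNReal.ofReal |l k * a k x| ^ p := by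
    intro k
    exact ((measurable_const.mul (hblocks k).1).abs.ennreal_ofReal).pow_const p
  have hpt : ∀ᵐ x : Rn n ∂volume,
      (‖f x‖₊ : ℝ≥0∞) ^ p ≤ ∑' k, ENNReal.ofReal |l k * a k x| ^ p := by
    filter_upwards [hae] with x hx
    have hsx : Summable fun k => l k * a k x := hx.summable
    have habs : Summable fun k => |l k * a k x| := hsx.abs
    have h1 : |f x| ≤ ∑' k, |l k * a k x| := by
      rw [← hx.tsum_eq]
      calc |∑' k, l k * a k x| = ‖∑' k, l k * a k x‖ := (Real.norm_eq_abs _).symm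
        _ ≤ ∑' k, ‖l k * a k x‖ :=
            norm_tsum_le_tsum_norm (by simpa [Real.norm_eq_abs, abs_mul] using habs)
        _ = ∑' k, |l k * a k x| := by simp only [Real.norm_eq_abs]
    have h2 : (‖f x‖₊ : ℝ≥0∞) ≤ ∑' k, ENNReal.ofReal |l k * a k x| := by
      rw [← enorm_eq_nnnorm, Real.enorm_eq_ofReal_abs, ← ENNReal.ofReal_tsum_of_nonneg (fun k => abs_nonneg _) habs]
      exact ENNReal.ofReal_le_ofReal h1
    calc (‖f x‖₊ : ℝ≥0∞) ^ p ≤ (∑' k, ENNReal.ofReal |l k * a k x|) ^ p :=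
          ENNReal.rpow_le_rpow h2 hp.le
      _ ≤ ∑' k, ENNReal.ofReal |l k * a k x| ^ p := tsum_rpow_le hp hp1
  have hblockint : ∀ k, ∫⁻ x, ENNReal.ofReal |a k x| ^ p ∂volume ≤ 1 := by
    intro k
    have h := block_eLpNorm_le_one hp hps (hblocks k)
    rw [eLpNorm_eq_lintegral_rpow_enorm_toReal hp'0 hp'T, hofp] at h
    have h2 := ENNReal.rpow_le_rpow h hp.le
    rw [ENNReal.one_rpow, ← ENNReal.rpow_mul, one_div, inv_mul_cancel₀ hp.ne',
      ENNReal.rpow_one] at h2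
    simpa [Real.enorm_eq_ofReal_abs] using h2
  calc eLpNorm f (ENNReal.ofReal p) volume
      = (∫⁻ x, (‖f x‖₊ : ℝ≥0∞) ^ p ∂volume) ^ (1 / p) := by
        rw [eLpNorm_eq_lintegral_rpow_enorm_toReal hp'0 hp'T, hofp]; rfl
    _ ≤ (∑' k, ∫⁻ x, ENNReal.ofReal |l k * a k x| ^ p ∂volume) ^ (1 / p) := by
        gcongr
        calc ∫⁻ x, (‖f x‖₊ : ℝ≥0∞) ^ p ∂volume
            ≤ ∫⁻ x, ∑' k, ENNReal.ofReal |l k * a k x| ^ p ∂volume := lintegral_mono_ae hpt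
          _ = ∑' k, ∫⁻ x, ENNReal.ofReal |l k * a k x| ^ p ∂volume :=
              lintegral_tsum fun k => (hmeas k).aemeasurable
    _ ≤ (∑' k, ENNReal.ofReal (|l k| ^ p)) ^ (1 / p) := by
        gcongr with k
        have hpt2 : ∀ x, ENNReal.ofReal |l k * a k x| ^ p
            = ENNReal.ofReal (|l k| ^ p) * ENNReal.ofReal |a k x| ^ p := by
          intro x
          rw [abs_mul, ENNReal.ofReal_mul (abs_nonneg _),
            ENNReal.mul_rpow_of_nonneg _ _ hp.le,
            ENNReal.ofReal_rpow_of_nonneg (abs_nonneg _) hp.le]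
        simp_rw [hpt2]
        rw [lintegral_const_mul _ (((hblocks k).1.abs.ennreal_ofReal).pow_const p)]
        calc ENNReal.ofReal (|l k| ^ p) * ∫⁻ x, ENNReal.ofReal |a k x| ^ p ∂volume
            ≤ ENNReal.ofReal (|l k| ^ p) * 1 := by gcongr; exact hblockint k
          _ = ENNReal.ofReal (|l k| ^ p) := mul_one _
    _ = ENNReal.ofReal ((∑' k, |l k| ^ p) ^ (1 / p)) := by
        rw [← ENNReal.ofReal_tsum_of_nonneg (fun k => Real.rpow_nonneg (abs_nonneg _) p) hsum,
          ENNReal.ofReal_rpow_of_nonneg (tsum_nonneg fun k => Real.rpow_nonneg (abs_nonneg _) p)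
            (by positivity)]

lemma exists_cover (E : Set (Rn n)) (hE : MeasurableSet E) :
    ∃ (t : Set (Rn n)) (r : Rn n → ℝ), t.Countable ∧
      (∀ x ∈ t, 0 < r x) ∧
      (∀ x ∈ t, volume (closedBall x (r x)) ≤ 2 * volume (E ∩ closedBall x (r x))) ∧
      volume (E \ ⋃ x ∈ t, closedBall x (r x)) = 0 ∧
      t.PairwiseDisjoint (fun x => closedBall x (r x)) := by
  set D := {x : Rn n | Tendsto
      (fun ρ => volume (E ∩ closedBall x ρ) / volume (closedBall x ρ)) (𝓝[>] 0) (𝓝 1)} with hD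
  have hdens : volume.restrict E Dᶜ = 0 := by
    have h := Besicovitch.ae_tendsto_measure_inter_div (volume : Measure (Rn n)) E
    rw [Filter.Eventually] at h
    simpa [hD, Set.compl_setOf, mem_ae_iff] using h
  have hs'null : volume (E \ (E ∩ D)) = 0 := by
    have : E \ (E ∩ D) = Dᶜ ∩ E := by ext x; simp [Set.mem_diff]; tauto
    rw [this, ← Measure.restrict_apply' hE]
    exact hdens
  set F : Rn n → Set ℝ := fun x =>
    {ρ | 0 < ρ ∧ volume (closedBall x ρ) ≤ 2 * volume (E ∩ closedBall x ρ)} with hF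
  have hFadm : ∀ x ∈ E ∩ D, ∀ δ > (0:ℝ), (F x ∩ Set.Ioo 0 δ).Nonempty := by
    rintro x ⟨-, hxD⟩ δ hδ
    have hev : {ρ : ℝ | (2:ℝ≥0∞)⁻¹ <
        volume (E ∩ closedBall x ρ) / volume (closedBall x ρ)} ∈ 𝓝[>] (0:ℝ) :=
      hxD.eventually (eventually_gt_nhds (by norm_num))
    rcases mem_nhdsGT_iff_exists_Ioo_subset.1 hev with ⟨u, hu, hsub⟩
    have hu0 : (0:ℝ) < u := hu
    refine ⟨min δ u / 2, ⟨?_, ?_⟩, ?_, ?_⟩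
    · positivity
    · set ρ := min δ u / 2
      have hρu : ρ ∈ Set.Ioo (0:ℝ) u := by
        constructor
        · positivity
        · calc min δ u / 2 ≤ u / 2 := by gcongr; exact min_le_right _ _
            _ < u := by linarith
      have hratio := hsub hρu
      have hb0 : volume (closedBall x ρ) ≠ 0 :=
        (measure_closedBall_pos volume x hρu.1).ne'
      have hbt : volume (closedBall x ρ) ≠ ∞ := measure_closedBall_lt_top.ne
      have hlt : (2:ℝ≥0∞)⁻¹ * volume (closedBall x ρ) ≤ volume (E ∩ closedBall x ρ) :=
        ((ENNReal.lt_div_iff_mul_lt (Or.inl hb0) (Or.inl hbt)).1 hratio).le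
      calc volume (closedBall x ρ) = 2 * ((2:ℝ≥0∞)⁻¹ * volume (closedBall x ρ)) := by
            rw [← mul_assoc, ENNReal.mul_inv_cancel two_ne_zero (by norm_num), one_mul]
        _ ≤ 2 * volume (E ∩ closedBall x ρ) := by gcongr
    · positivity
    · calc min δ u / 2 ≤ δ / 2 := by gcongr; exact min_le_left _ _
        _ < δ := by linarith
  obtain ⟨t, r, tcount, tsub, hrF, hnull, hdisj⟩ :=
    Besicovitch.exists_disjoint_closedBall_covering_ae volume F (E ∩ D) hFadm
      (fun _ => 1) (fun _ _ => one_pos)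
  refine ⟨t, r, tcount, fun x hx => (hrF x hx).1.1, fun x hx => (hrF x hx).1.2, ?_, hdisj⟩
  have hsubset : E \ ⋃ x ∈ t, closedBall x (r x) ⊆
      (E \ (E ∩ D)) ∪ ((E ∩ D) \ ⋃ x ∈ t, closedBall x (r x)) := by
    intro x hx
    by_cases hxD : x ∈ D
    · exact Or.inr ⟨⟨hx.1, hxD⟩, hx.2⟩
    · exact Or.inl ⟨hx.1, fun h => hxD h.2⟩
  exact measure_mono_null hsubset (measure_union_null hs'null hnull)

lemma zero_block (hp : 0 < p) : IsBlock n p s 0 (fun _ => (0:ℝ)) :=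
  ⟨measurable_const, 0, 1, one_pos, fun _ _ => rfl, by
    rw [show (fun _ : Rn n => (0:ℝ)) = (0 : Rn n → ℝ) from rfl, eLpNorm_zero]
    exact zero_le⟩

lemma enn_cancel {X w : ℝ≥0∞} (h0 : X ≠ 0) (hT : X ≠ ∞) : (X * w)⁻¹ * X = w⁻¹ := by
  rw [ENNReal.mul_inv (Or.inl h0) (Or.inl hT), mul_comm X⁻¹ w⁻¹, mul_assoc,
    ENNReal.inv_mul_cancel h0 hT, mul_one]

lemma exists_decomp (hp : 0 < p) (hp1 : p ≤ 1) (hps : ENNReal.ofReal p < s)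
    {f : Rn n → ℝ} (hf : Measurable f)
    (hfp : ∫⁻ x, ENNReal.ofReal |f x| ^ p ∂volume ≠ ∞) :
    ∃ l a, IsBLDecomp n p s 0 f l a ∧
      ENNReal.ofReal (∑' k, |l k| ^ min p 1) ≤
        4 * ∫⁻ x, ENNReal.ofReal |f x| ^ p ∂volume := by
  have hmin : min p 1 = p := min_eq_left hp1
  have hs0 : s ≠ 0 := by
    intro h; rw [h] at hps; exact (not_lt_of_ge zero_le) hps
  set σ : ℝ := s.toReal⁻¹ with hσ
  have hσ0 : 0 ≤ σ := by positivity
  have hσp : σ * p ≤ 1 := by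
    by_cases hsT : s = ∞
    · simp [hσ, hsT]
    · have h1 : p < s.toReal := by
        have := ENNReal.toReal_lt_toReal ENNReal.ofReal_ne_top hsT |>.2 hps
        rwa [ENNReal.toReal_ofReal hp.le] at this
      have h2 : 0 < s.toReal := lt_trans hp h1
      rw [hσ]
      rw [inv_mul_le_iff₀ h2]
      nlinarith
  -- the level sets
  set E : ℤ → Set (Rn n) := fun j => {x | (2:ℝ)^j < |f x| ∧ |f x| ≤ (2:ℝ)^(j+1)} with hE
  have hEmeas : ∀ j, MeasurableSet (E j) := by
    intro j
    exact (measurableSet_lt measurable_const hf.abs).inter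
      (measurableSet_le hf.abs measurable_const)
  have hEdisj : Pairwise (Function.onFun Disjoint E) := by
    have key : ∀ j j' : ℤ, j < j' → Disjoint (E j) (E j') := by
      intro j j' hlt
      refine Set.disjoint_left.2 fun x hx hx' => ?_
      have h1 : (2:ℝ)^(j+1) ≤ (2:ℝ)^j' := zpow_le_zpow_right₀ one_le_two (by omega)
      exact absurd (lt_of_le_of_lt (hx.2.trans h1) hx'.1) (lt_irrefl _)
    intro j j' hne
    rcases hne.lt_or_gt with h|h
    · exact key _ _ h
    · exact (key _ _ h).symm
  have hEsub : ∀ j, ∀ x ∈ E j, (2:ℝ)^j < |f x| ∧ |f x| ≤ (2:ℝ)^(j+1) := fun j x hx => hx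
  -- coverings
  choose t r tcount hrpos hdens hnull hdisj using fun j : ℤ => exists_cover (E j) (hEmeas j)
  haveI : ∀ j : ℤ, Countable (t j) := fun j => (tcount j).to_subtype
  -- the index type
  set ι := (j : ℤ) × (t j) with hι
  haveI : Countable ι := inferInstanceAs (Countable ((j : ℤ) × (t j)))
  haveI : Nonempty ι ∨ IsEmpty ι := isEmpty_or_nonempty ι |>.symm.imp id id
  -- pieces and balls
  set Bl : ι → Set (Rn n) := fun i => closedBall (i.2 : Rn n) (r i.1 i.2) with hBl
  set S : ι → Set (Rn n) := fun i => E i.1 ∩ Bl i with hS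
  have hSmeas : ∀ i, MeasurableSet (S i) := fun i => (hEmeas i.1).inter measurableSet_closedBall
  have hrpos' : ∀ i : ι, 0 < r i.1 i.2 := fun i => hrpos i.1 i.2 i.2.2
  have hB0 : ∀ i, volume (Bl i) ≠ 0 := fun i =>
    (measure_closedBall_pos volume _ (hrpos' i)).ne'
  have hBT : ∀ i, volume (Bl i) ≠ ∞ := fun i => measure_closedBall_lt_top.ne
  have hBS : ∀ i, volume (Bl i) ≤ 2 * volume (S i) := fun i => hdens i.1 i.2 i.2.2
  have hST : ∀ i, volume (S i) ≠ ∞ := fun i =>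
    (lt_of_le_of_lt (measure_mono Set.inter_subset_right) measure_closedBall_lt_top).ne
  have hS0 : ∀ i, volume (S i) ≠ 0 := by
    intro i h
    apply hB0 i
    have := hBS i
    rw [h, mul_zero] at this
    exact le_antisymm this zero_le
  -- the coefficients and blocks
  set lam : ι → ℝ := fun i =>
    (2:ℝ)^(i.1+1) * (volume (S i)).toReal ^ σ * (volume (Bl i)).toReal ^ (1/p - σ) with hlam
  have hlampos : ∀ i, 0 < lam i := by
    intro i
    have h1 : 0 < (volume (S i)).toReal := ENNReal.toReal_pos (hS0 i) (hST i)
    have h2 : 0 < (volume (Bl i)).toReal := ENNReal.toReal_pos (hB0 i) (hBT i)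
    have h3 : (0:ℝ) < (2:ℝ)^(i.1+1) := zpow_pos two_pos _
    positivity
  set A : ι → Rn n → ℝ := fun i x => (lam i)⁻¹ * (S i).indicator f x with hA
  have hAmeas : ∀ i, Measurable (A i) :=
    fun i => measurable_const.mul (hf.indicator (hSmeas i))
  -- ofReal of lam
  have hofreal : ∀ i, ENNReal.ofReal (lam i) =
      ENNReal.ofReal ((2:ℝ)^(i.1+1)) * volume (S i) ^ σ * volume (Bl i) ^ (1/p - σ) := by
    intro i
    have h1 : 0 < (volume (S i)).toReal := ENNReal.toReal_pos (hS0 i) (hST i)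
    have h2 : 0 < (volume (Bl i)).toReal := ENNReal.toReal_pos (hB0 i) (hBT i)
    have h3 : (0:ℝ) < (2:ℝ)^(i.1+1) := zpow_pos two_pos _
    rw [hlam]
    rw [ENNReal.ofReal_mul (by positivity), ENNReal.ofReal_mul (by positivity),
      ← ENNReal.ofReal_rpow_of_pos h1, ← ENNReal.ofReal_rpow_of_pos h2,
      ENNReal.ofReal_toReal (hST i), ENNReal.ofReal_toReal (hBT i)]
  -- each A i is a block
  have hXfacts : ∀ i, ENNReal.ofReal ((2:ℝ)^(i.1+1)) * volume (S i) ^ σ ≠ 0 ∧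
      ENNReal.ofReal ((2:ℝ)^(i.1+1)) * volume (S i) ^ σ ≠ ∞ := by
    intro i
    have hc : (0:ℝ) < (2:ℝ)^(i.1+1) := zpow_pos two_pos _
    constructor
    · apply mul_ne_zero
      · simp [ENNReal.ofReal_eq_zero, not_le, hc]
      · simp [ENNReal.rpow_eq_zero_iff, hS0 i, hST i]
    · apply ENNReal.mul_ne_top ENNReal.ofReal_ne_top
      simp [ENNReal.rpow_eq_top_iff, hS0 i, hST i]
  have hblock : ∀ i, IsBlock n p s 0 (A i) := by
    intro i
    refine ⟨hAmeas i, (i.2 : Rn n), r i.1 i.2, hrpos' i, ?_, ?_⟩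
    · intro x hx
      have hxS : x ∉ S i := fun h => hx h.2
      simp [hA, Set.indicator_of_notMem hxS]
    · have hc : (0:ℝ) < (2:ℝ)^(i.1+1) := zpow_pos two_pos _
      have hcoe : (‖(2:ℝ)^(i.1+1)‖₊ : ℝ≥0∞) = ENNReal.ofReal ((2:ℝ)^(i.1+1)) := by
        rw [← enorm_eq_nnnorm, Real.enorm_eq_ofReal_abs, abs_of_pos hc]
      have hind_le : eLpNorm ((S i).indicator f) s volume ≤
          ENNReal.ofReal ((2:ℝ)^(i.1+1)) * volume (S i) ^ σ := by
        have hmono : eLpNorm ((S i).indicator f) s volume ≤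
            eLpNorm ((S i).indicator (fun _ => (2:ℝ)^(i.1+1))) s volume := by
          apply eLpNorm_mono
          intro x
          by_cases hx : x ∈ S i
          · rw [Set.indicator_of_mem hx, Set.indicator_of_mem hx, Real.norm_eq_abs,
              Real.norm_eq_abs, abs_of_pos hc]
            exact hx.1.2
          · simp [Set.indicator_of_notMem hx]
        refine hmono.trans ?_
        by_cases hsT : s = ∞
        · rw [hsT, eLpNorm_exponent_top]
          refine (eLpNormEssSup_indicator_const_le (S i) ((2:ℝ)^(i.1+1))).trans ?_
          rw [hσ, hsT]
          rw [ENNReal.toReal_top, _root_.inv_zero, ENNReal.rpow_zero, mul_one, enorm_eq_nnnorm, hcoe]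
        · rw [eLpNorm_indicator_const (hSmeas i) hs0 hsT, enorm_eq_nnnorm, hcoe, hσ, one_div]
      have hsmul : eLpNorm (A i) s volume
          = (ENNReal.ofReal (lam i))⁻¹ * eLpNorm ((S i).indicator f) s volume := by
        have h1 : A i = (lam i)⁻¹ • ((S i).indicator f) := rfl
        rw [h1, eLpNorm_const_smul]
        congr 1
        rw [Real.enorm_eq_ofReal_abs, abs_of_pos (inv_pos.2 (hlampos i)),
          ENNReal.ofReal_inv_of_pos (hlampos i)]
      have h2 : 0 < (volume (Bl i)).toReal := ENNReal.toReal_pos (hB0 i) (hBT i)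
      have hRHS : ENNReal.ofReal ((volume (Bl i)).toReal ^ (-0/(p*(n:ℝ)) - 1/p + s.toReal⁻¹))
          = volume (Bl i) ^ (-0/(p*(n:ℝ)) - 1/p + s.toReal⁻¹) := by
        rw [← ENNReal.ofReal_rpow_of_pos h2, ENNReal.ofReal_toReal (hBT i)]
      rw [hsmul, hRHS]
      calc (ENNReal.ofReal (lam i))⁻¹ * eLpNorm ((S i).indicator f) s volume
          ≤ (ENNReal.ofReal (lam i))⁻¹
            * (ENNReal.ofReal ((2:ℝ)^(i.1+1)) * volume (S i) ^ σ) := by gcongr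
        _ = (volume (Bl i) ^ (1/p - σ))⁻¹ := by
            rw [hofreal i, enn_cancel (hXfacts i).1 (hXfacts i).2]
        _ = volume (Bl i) ^ (-0/(p*(n:ℝ)) - 1/p + s.toReal⁻¹) := by
            rw [← ENNReal.rpow_neg]
            congr 1
            rw [hσ]
            ring
  -- the λ^p bound
  have hlamp : ∀ i, ENNReal.ofReal (|lam i| ^ p) ≤
      4 * ENNReal.ofReal (((2:ℝ)^(i.1:ℤ)) ^ p) * volume (S i) := by
    intro i
    set j := i.1 with hj
    have hσp0 : 0 ≤ σ * p := mul_nonneg hσ0 hp.le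
    have h1 : ENNReal.ofReal (|lam i| ^ p) = ENNReal.ofReal (lam i) ^ p := by
      rw [abs_of_pos (hlampos i), ← ENNReal.ofReal_rpow_of_nonneg (hlampos i).le hp.le]
    have hcp : ENNReal.ofReal ((2:ℝ)^(j+1)) ^ p ≤ 2 * ENNReal.ofReal (((2:ℝ)^j) ^ p) := by
      rw [ENNReal.ofReal_rpow_of_nonneg (by positivity) hp.le]
      have hreal : ((2:ℝ)^(j+1)) ^ p ≤ 2 * ((2:ℝ)^j) ^ p := by
        rw [zpow_add_one₀ (two_ne_zero), Real.mul_rpow (by positivity) (by norm_num)]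
        calc ((2:ℝ)^j)^p * (2:ℝ)^p ≤ ((2:ℝ)^j)^p * 2 := by
              gcongr
              calc (2:ℝ)^p ≤ (2:ℝ)^(1:ℝ) :=
                  Real.rpow_le_rpow_of_exponent_le one_le_two hp1
                _ = 2 := Real.rpow_one 2
          _ = 2 * ((2:ℝ)^j)^p := mul_comm _ _
      calc ENNReal.ofReal (((2:ℝ)^(j+1))^p) ≤ ENNReal.ofReal (2 * ((2:ℝ)^j)^p) :=
            ENNReal.ofReal_le_ofReal hreal
        _ = 2 * ENNReal.ofReal (((2:ℝ)^j)^p) := by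
            rw [ENNReal.ofReal_mul (by norm_num)]
            norm_num
    have hvB : volume (Bl i) ^ (1 - σ*p) ≤ 2 * volume (S i) ^ (1 - σ*p) := by
      have h2 : volume (Bl i) ^ (1 - σ*p) ≤ (2 * volume (S i)) ^ (1 - σ*p) :=
        ENNReal.rpow_le_rpow (hBS i) (by linarith)
      rw [ENNReal.mul_rpow_of_nonneg _ _ (by linarith)] at h2
      refine h2.trans ?_
      gcongr
      calc (2:ℝ≥0∞) ^ (1 - σ*p) ≤ 2 ^ (1:ℝ) :=
            ENNReal.rpow_le_rpow_of_exponent_le one_le_two (by linarith)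
        _ = 2 := ENNReal.rpow_one 2
    rw [h1, hofreal i]
    rw [ENNReal.mul_rpow_of_nonneg _ _ hp.le, ENNReal.mul_rpow_of_nonneg _ _ hp.le,
      ← ENNReal.rpow_mul, ← ENNReal.rpow_mul,
      show ((1:ℝ)/p - σ) * p = 1 - σ * p by rw [sub_mul, one_div, inv_mul_cancel₀ hp.ne'],
      show σ * p = σ * p from rfl]
    calc ENNReal.ofReal ((2:ℝ)^(j+1)) ^ p * volume (S i) ^ (σ*p) * volume (Bl i) ^ (1-σ*p)
        ≤ (2 * ENNReal.ofReal (((2:ℝ)^j)^p)) * volume (S i) ^ (σ*p)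
          * (2 * volume (S i) ^ (1-σ*p)) := by gcongr
      _ = 4 * ENNReal.ofReal (((2:ℝ)^j)^p)
          * (volume (S i) ^ (σ*p) * volume (S i) ^ (1-σ*p)) := by ring
      _ = 4 * ENNReal.ofReal (((2:ℝ)^j)^p) * volume (S i) := by
          rw [← ENNReal.rpow_add _ _ (hS0 i) (hST i),
            show σ*p + (1-σ*p) = 1 by ring, ENNReal.rpow_one]
  -- sum over each level
  have hsumlevel : ∀ j : ℤ, (∑' q : t j, volume (S ⟨j, q⟩)) ≤ volume (E j) := by
    intro j
    have hdisj' : (t j).PairwiseDisjoint (fun x => E j ∩ closedBall x (r j x)) :=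
      (hdisj j).mono fun x => Set.inter_subset_right
    rw [show (fun q : t j => volume (S ⟨j, q⟩))
        = fun q : t j => volume (E j ∩ closedBall (q : Rn n) (r j q)) from rfl,
      ← measure_biUnion (tcount j) hdisj'
        (fun x _ => (hEmeas j).inter measurableSet_closedBall)]
    exact measure_mono (Set.iUnion₂_subset fun x _ => Set.inter_subset_left)
  have hlevelint : ∀ j : ℤ, ENNReal.ofReal (((2:ℝ)^(j:ℤ)) ^ p) * volume (E j) ≤
      ∫⁻ x in E j, ENNReal.ofReal |f x| ^ p ∂volume := by
    intro j
    rw [← setLIntegral_const (E j) (ENNReal.ofReal (((2:ℝ)^(j:ℤ)) ^ p))]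
    refine setLIntegral_mono (hf.abs.ennreal_ofReal.pow_const p) fun x hx => ?_
    calc ENNReal.ofReal (((2:ℝ)^(j:ℤ)) ^ p)
        = ENNReal.ofReal ((2:ℝ)^(j:ℤ)) ^ p :=
          (ENNReal.ofReal_rpow_of_nonneg (by positivity) hp.le).symm
      _ ≤ ENNReal.ofReal |f x| ^ p :=
          ENNReal.rpow_le_rpow (ENNReal.ofReal_le_ofReal hx.1.le) hp.le
  -- total sum bound
  have htotal : (∑' i : ι, ENNReal.ofReal (|lam i| ^ p)) ≤
      4 * ∫⁻ x, ENNReal.ofReal |f x| ^ p ∂volume := by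
    calc ∑' i : ι, ENNReal.ofReal (|lam i| ^ p)
        ≤ ∑' i : ι, 4 * ENNReal.ofReal (((2:ℝ)^(i.1:ℤ)) ^ p) * volume (S i) :=
          ENNReal.tsum_le_tsum hlamp
      _ = ∑' j : ℤ, ∑' q : t j, 4 * ENNReal.ofReal (((2:ℝ)^(j:ℤ))^p) * volume (S ⟨j,q⟩) :=
          ENNReal.tsum_sigma' _
      _ ≤ ∑' j : ℤ, 4 * ∫⁻ x in E j, ENNReal.ofReal |f x| ^ p ∂volume := by
          refine ENNReal.tsum_le_tsum fun j => ?_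
          rw [ENNReal.tsum_mul_left]
          calc (4 * ENNReal.ofReal (((2:ℝ)^(j:ℤ))^p)) * ∑' q : t j, volume (S ⟨j,q⟩)
              ≤ (4 * ENNReal.ofReal (((2:ℝ)^(j:ℤ))^p)) * volume (E j) := by
                gcongr
                exact hsumlevel j
            _ = 4 * (ENNReal.ofReal (((2:ℝ)^(j:ℤ))^p) * volume (E j)) := mul_assoc _ _ _
            _ ≤ 4 * ∫⁻ x in E j, ENNReal.ofReal |f x| ^ p ∂volume := by
                gcongr
                exact hlevelint j
      _ = 4 * ∑' j : ℤ, ∫⁻ x in E j, ENNReal.ofReal |f x| ^ p ∂volume :=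
          ENNReal.tsum_mul_left
      _ = 4 * ∫⁻ x in ⋃ j : ℤ, E j, ENNReal.ofReal |f x| ^ p ∂volume := by
          rw [lintegral_iUnion hEmeas hEdisj]
      _ ≤ 4 * ∫⁻ x, ENNReal.ofReal |f x| ^ p ∂volume := by
          gcongr
          exact Measure.restrict_le_self
  -- a.e. decomposition over ι
  have hhassum : ∀ᵐ x : Rn n ∂volume, HasSum (fun i : ι => lam i * A i x) (f x) := by
    have hN : volume (⋃ j : ℤ, (E j \ ⋃ y ∈ t j, closedBall y (r j y))) = 0 :=
      measure_iUnion_null hnull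
    filter_upwards [measure_eq_zero_iff_ae_notMem.1 hN] with x hx
    by_cases hfx : f x = 0
    · have hterm : ∀ i : ι, lam i * A i x = 0 := by
        intro i
        have hxS : x ∉ S i := by
          intro h
          have h2 := h.1.1
          rw [hfx, abs_zero] at h2
          exact absurd h2 (not_lt.2 (_root_.zpow_pos two_pos _).le)
        simp [hA, Set.indicator_of_notMem hxS]
      rw [hfx, show (fun i : ι => lam i * A i x) = fun _ => 0 from funext hterm]
      exact hasSum_zero
    · obtain ⟨j, hj⟩ := exists_mem_Ioc_zpow (abs_pos.2 hfx) one_lt_two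
      have hxE : x ∈ E j := ⟨hj.1, hj.2⟩
      have hxcover : x ∈ ⋃ y ∈ t j, closedBall y (r j y) := by
        by_contra h
        exact hx (Set.mem_iUnion.2 ⟨j, ⟨hxE, h⟩⟩)
      obtain ⟨y, hy, hxy⟩ := Set.mem_iUnion₂.1 hxcover
      set i₀ : ι := ⟨j, ⟨y, hy⟩⟩ with hi₀
      have hxS0 : x ∈ S i₀ := ⟨hxE, hxy⟩
      have hval : lam i₀ * A i₀ x = f x := by
        rw [show A i₀ x = (lam i₀)⁻¹ * f x from by
            simp [hA, Set.indicator_of_mem hxS0],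
          ← mul_assoc, mul_inv_cancel₀ (hlampos i₀).ne', one_mul]
      have hzero : ∀ i : ι, i ≠ i₀ → lam i * A i x = 0 := by
        intro i hi
        have hxS : x ∉ S i := by
          intro hxSi
          rcases eq_or_ne i.1 j with h1 | h1
          · obtain ⟨j', q⟩ := i
            simp only at h1
            subst h1
            have hq : (q : Rn n) ≠ y := by
              intro hqy
              exact hi (by rw [hi₀, show q = ⟨y, hy⟩ from Subtype.ext hqy])
            exact Set.disjoint_left.mp (hdisj j' q.2 hy hq) hxSi.2 hxy
          · exact Set.disjoint_left.mp (hEdisj h1) hxSi.1 hxE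
        simp [hA, Set.indicator_of_notMem hxS]
      have h := hasSum_single (f := fun i : ι => lam i * A i x) i₀ hzero
      convert h using 1
      exact hval.symm
  -- transfer to ℕ
  obtain ⟨inj, hinj⟩ := Countable.exists_injective_nat ι
  set l : ℕ → ℝ := Function.extend inj lam 0 with hl
  set a : ℕ → Rn n → ℝ := Function.extend inj A (fun _ _ => 0) with ha
  have hlcomp : ∀ i, l (inj i) = lam i := fun i => hinj.extend_apply _ _ _
  have hacomp : ∀ i, a (inj i) = A i := fun i => hinj.extend_apply _ _ _
  have hloff : ∀ k, (¬∃ i, inj i = k) → l k = 0 := fun k h => Function.extend_apply' _ _ _ h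
  have haoff : ∀ k, (¬∃ i, inj i = k) → a k = fun _ => 0 := fun k h =>
    Function.extend_apply' _ _ _ h
  have hsummand : (fun k => |l k| ^ min p 1) ∘ inj = fun i => |lam i| ^ p := by
    funext i; simp only [Function.comp_apply, hlcomp, hmin]
  have hsummand0 : ∀ k ∉ Set.range inj, |l k| ^ min p 1 = 0 := by
    intro k hk
    rw [hloff k (fun hex => hk (Set.mem_range.2 hex)), abs_zero, hmin, Real.zero_rpow hp.ne']
  have hsumfin : (∑' i : ι, ENNReal.ofReal (|lam i| ^ p)) ≠ ∞ :=
    (lt_of_le_of_lt htotal (by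
      refine ENNReal.mul_lt_top (by norm_num) ?_
      exact lt_of_le_of_ne le_top hfp)).ne
  have hsummable : Summable fun i : ι => |lam i| ^ p := by
    have := ENNReal.summable_toReal hsumfin
    simpa [ENNReal.toReal_ofReal (Real.rpow_nonneg (abs_nonneg _) p)] using this
  have hlsummable : Summable fun k => |l k| ^ min p 1 := by
    rw [← hinj.summable_iff hsummand0]
    rw [hsummand]
    exact hsummable
  refine ⟨l, a, ⟨?_, hlsummable, ?_⟩, ?_⟩
  · intro k
    by_cases h : ∃ i, inj i = k
    · obtain ⟨i, rfl⟩ := h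
      rw [hacomp]
      exact hblock i
    · rw [haoff k h]
      exact zero_block hp
  · filter_upwards [hhassum] with x hx
    have hcomp : (fun k => l k * a k x) ∘ inj = fun i => lam i * A i x := by
      funext i; simp only [Function.comp_apply, hlcomp, hacomp]
    refine (hinj.hasSum_iff ?_).1 (by rw [hcomp]; exact hx)
    intro k hk
    have h : ¬∃ i, inj i = k := fun hex => hk (Set.mem_range.2 hex)
    rw [hloff k h, haoff k h, zero_mul]
  · have heq : (∑' k, |l k| ^ min p 1) = ∑' i : ι, |lam i| ^ p := by
      rw [← hinj.tsum_eq (f := fun k => |l k| ^ min p 1)]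
      · rw [show (fun i => |l (inj i)| ^ min p 1) = fun i : ι => |lam i| ^ p from
          funext fun i => by rw [hlcomp, hmin]]
      · intro k hk
        by_contra h
        exact Function.mem_support.1 hk (hsummand0 k h)
    rw [heq, ENNReal.ofReal_tsum_of_nonneg (fun i => Real.rpow_nonneg (abs_nonneg _) p)
      hsummable]
    exact htotal


/-- Membership in the block space `BL^{p,s}_{|x|^α}`. -/
def MemBL (n : ℕ) (p : ℝ) (s : ℝ≥0∞) (α : ℝ) (f : Rn n → ℝ) : Prop :=
  ∃ l a, IsBLDecomp n p s α f l a

/-- The quasinorm of `BL^{p,s}_{|x|^α}`: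
`inf (Σ |l k| ^ min p 1)^(1/min p 1)` over all block decompositions. -/
def BLnorm (n : ℕ) (p : ℝ) (s : ℝ≥0∞) (α : ℝ) (f : Rn n → ℝ) : ℝ :=
  sInf { c | ∃ l a, IsBLDecomp n p s α f l a ∧
    c = (∑' k, |l k| ^ min p 1) ^ (min p 1)⁻¹ }

/-- for `0 < p ≤ 1 < s` (indeed `p < s ≤ ∞`), `BL^{p,s}_{|x|^0} = L^p`
as sets, with equivalent quasinorms. -/
theorem BL_eq_Lp (n : ℕ) (hn : 0 < n) (p : ℝ) (s : ℝ≥0∞)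
    (hp : 0 < p) (hp1 : p ≤ 1) (hps : ENNReal.ofReal p < s) :
    ∃ C > (0 : ℝ), ∀ f : Rn n → ℝ, Measurable f →
      ((MemLp f (ENNReal.ofReal p) volume ↔ MemBL n p s 0 f) ∧
       (MemBL n p s 0 f →
         eLpNorm f (ENNReal.ofReal p) volume ≤ ENNReal.ofReal (C * BLnorm n p s 0 f) ∧
         BLnorm n p s 0 f ≤ C * (eLpNorm f (ENNReal.ofReal p) volume).toReal)) := by
  have hmin : min p 1 = p := min_eq_left hp1
  have hp'0 : ENNReal.ofReal p ≠ 0 := by simp [ENNReal.ofReal_eq_zero, not_le, hp]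
  have hp'T : ENNReal.ofReal p ≠ ∞ := ENNReal.ofReal_ne_top
  have hofp : (ENNReal.ofReal p).toReal = p := ENNReal.toReal_ofReal hp.le
  set C : ℝ := max ((4:ℝ) ^ p⁻¹) 1 with hC
  have hC1 : (1:ℝ) ≤ C := le_max_right _ _
  refine ⟨C, lt_of_lt_of_le one_pos hC1, fun f hf => ?_⟩
  -- the integral identity
  have hI : ∫⁻ x, ENNReal.ofReal |f x| ^ p ∂volume
      = eLpNorm f (ENNReal.ofReal p) volume ^ p := by
    rw [eLpNorm_eq_lintegral_rpow_enorm_toReal hp'0 hp'T, hofp, ← ENNReal.rpow_mul, one_div,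
      inv_mul_cancel₀ hp.ne', ENNReal.rpow_one]
    refine lintegral_congr fun x => ?_
    rw [Real.enorm_eq_ofReal_abs]
  -- forward direction (construction)
  have hfwd : MemLp f (ENNReal.ofReal p) volume → MemBL n p s 0 f := by
    intro hmem
    have hfin : ∫⁻ x, ENNReal.ofReal |f x| ^ p ∂volume ≠ ∞ := by
      rw [hI]
      exact (ENNReal.rpow_lt_top_of_nonneg hp.le hmem.2.ne).ne
    obtain ⟨l, a, hd, -⟩ := exists_decomp hp hp1 hps hf hfin
    exact ⟨l, a, hd⟩
  -- backward direction
  have hbwd : MemBL n p s 0 f → MemLp f (ENNReal.ofReal p) volume := by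
    rintro ⟨l, a, hd⟩
    exact ⟨hf.aestronglyMeasurable,
      lt_of_le_of_lt (decomp_bound hp hp1 hps hd) ENNReal.ofReal_lt_top⟩
  refine ⟨⟨hfwd, hbwd⟩, fun hmem => ?_⟩
  -- the set defining BLnorm
  set Sf := { c | ∃ l a, IsBLDecomp n p s 0 f l a ∧
    c = (∑' k, |l k| ^ min p 1) ^ (min p 1)⁻¹ } with hSf
  obtain ⟨l₀, a₀, hd₀⟩ := hmem
  have hne : Sf.Nonempty := ⟨_, l₀, a₀, hd₀, rfl⟩
  have hnonneg : ∀ c ∈ Sf, (0:ℝ) ≤ c := by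
    rintro c ⟨l, a, hd, rfl⟩
    exact Real.rpow_nonneg (tsum_nonneg fun k => Real.rpow_nonneg (abs_nonneg _) _) _
  have hbdd : BddBelow Sf := ⟨0, fun c hc => hnonneg c hc⟩
  have hsInf0 : 0 ≤ sInf Sf := le_csInf hne hnonneg
  have hbd : ∀ c ∈ Sf, eLpNorm f (ENNReal.ofReal p) volume ≤ ENNReal.ofReal c := by
    rintro c ⟨l, a, hd, rfl⟩
    have h := decomp_bound hp hp1 hps hd
    rw [hmin, ← one_div]
    exact h
  constructor
  · -- eLpNorm ≤ C * BLnorm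
    have h1 : eLpNorm f (ENNReal.ofReal p) volume ≤ ENNReal.ofReal (sInf Sf) := by
      refine ENNReal.le_of_forall_pos_le_add fun ε hε _ => ?_
      obtain ⟨c, hc, hclt⟩ := Real.lt_sInf_add_pos hne (by exact_mod_cast hε : (0:ℝ) < ε)
      calc eLpNorm f (ENNReal.ofReal p) volume ≤ ENNReal.ofReal c := hbd c hc
        _ ≤ ENNReal.ofReal (sInf Sf + ε) := ENNReal.ofReal_le_ofReal hclt.le
        _ ≤ ENNReal.ofReal (sInf Sf) + ENNReal.ofReal (ε:ℝ) := ENNReal.ofReal_add_le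
        _ = ENNReal.ofReal (sInf Sf) + ε := by rw [ENNReal.ofReal_coe_nnreal]
    refine h1.trans (ENNReal.ofReal_le_ofReal ?_)
    calc sInf Sf = 1 * sInf Sf := (one_mul _).symm
      _ ≤ C * sInf Sf := by gcongr
    -- note BLnorm n p s 0 f = sInf Sf
  · -- BLnorm ≤ C * toReal
    have hmemLp := hbwd ⟨l₀, a₀, hd₀⟩
    have hfin : ∫⁻ x, ENNReal.ofReal |f x| ^ p ∂volume ≠ ∞ := by
      rw [hI]
      exact (ENNReal.rpow_lt_top_of_nonneg hp.le hmemLp.2.ne).ne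
    obtain ⟨l, a, hd, hsum⟩ := exists_decomp hp hp1 hps hf hfin
    set T : ℝ := (eLpNorm f (ENNReal.ofReal p) volume).toReal with hT
    have hT0 : 0 ≤ T := ENNReal.toReal_nonneg
    have h4T : (4:ℝ≥0∞) * eLpNorm f (ENNReal.ofReal p) volume ^ p ≠ ∞ :=
      ENNReal.mul_ne_top (by norm_num) (ENNReal.rpow_lt_top_of_nonneg hp.le hmemLp.2.ne).ne
    have hSig : (∑' k, |l k| ^ min p 1) ≤ 4 * T ^ p := by
      have h2 := ENNReal.toReal_mono h4T (hsum.trans_eq (by rw [hI]))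
      rwa [ENNReal.toReal_ofReal (tsum_nonneg fun k => Real.rpow_nonneg (abs_nonneg _) _),
        ENNReal.toReal_mul, ← ENNReal.toReal_rpow,
        show ((4:ℝ≥0∞).toReal) = (4:ℝ) by norm_num] at h2
    have hmem' : ((∑' k, |l k| ^ min p 1) ^ (min p 1)⁻¹) ∈ Sf := ⟨l, a, hd, rfl⟩
    calc BLnorm n p s 0 f ≤ (∑' k, |l k| ^ min p 1) ^ (min p 1)⁻¹ := csInf_le hbdd hmem'
      _ ≤ (4 * T ^ p) ^ (min p 1)⁻¹ := by
          rw [hmin]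
          exact Real.rpow_le_rpow (tsum_nonneg fun k => Real.rpow_nonneg (abs_nonneg _) _)
            (by rwa [hmin] at hSig) (by positivity)
      _ = (4:ℝ) ^ p⁻¹ * T := by
          rw [hmin, Real.mul_rpow (by norm_num) (Real.rpow_nonneg hT0 p),
            ← Real.rpow_mul hT0, mul_inv_cancel₀ hp.ne', Real.rpow_one]
      _ ≤ C * T := mul_le_mul_of_nonneg_right (le_max_left _ _) hT0
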